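/- Let n ∈ ℕ and let Z ⊆ (Fin n → k) be a Zariski-closed subset (a finite-dimensional affine variety). On Z^ℕ := {x : ℕ → (Fin n → k) | ∀ s, x s ∈ Z}, let Sym act by permuting the ℕ-indexed copies, (σ • x) s = x (σ⁻¹ s). Then Z^ℕ is topologically Sym-Noetherian: for every descending chain X₁ ⊇ X₂ ⊇ X₃ ⊇ ⋯ of Zariski-closed Sym-stable subsets of Z^ℕ, there exists N such that X_n = X_{n+1} for all n ≥ N. -/

import Mathlib

noncomputable section

/-- A permutation of `ℕ` with finite support. -/
def IsFinPerm (σ : Equiv.Perm ℕ) : Prop := ∃ N : ℕ, ∀ i : ℕ, N ≤ i → σ i = i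

/-- A subset of `I → k` is Zariski closed if it is the common zero locus of a
set of polynomials. -/
def IsZClosed {k : Type*} [Field k] {I : Type*} (X : Set (I → k)) : Prop :=
  ∃ S : Set (MvPolynomial I k), X = {x | ∀ f ∈ S, MvPolynomial.eval x f = 0}

open MvPolynomial Finsupp

namespace SymNoeth

abbrev A := Lex (ℕᵒᵈ →₀ ℕ)

lemma A_zero_le (a : A) : (0:A) ≤ a := Finsupp.toLex_monotone zero_le

instance : OrderBot A where
  bot := 0
  bot_le := A_zero_le

lemma mapDomain_lex_lt {α : Type*} [LinearOrder α] {G : α → α} (hG : StrictMono G)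
    {a b : α →₀ ℕ} (h : toLex a < toLex b) :
    toLex (a.mapDomain G) < toLex (b.mapDomain G) := by
  rw [Finsupp.Lex.lt_iff] at h ⊢
  simp only [ofLex_toLex] at h ⊢
  obtain ⟨i, hji, hi⟩ := h
  refine ⟨G i, fun j hj => ?_, ?_⟩
  · by_cases hr : j ∈ Set.range G
    · obtain ⟨s, rfl⟩ := hr
      rw [Finsupp.mapDomain_apply hG.injective, Finsupp.mapDomain_apply hG.injective]
      exact hji s (hG.lt_iff_lt.mp hj)
    · rw [Finsupp.mapDomain_notin_range _ _ hr, Finsupp.mapDomain_notin_range _ _ hr]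
  · rw [Finsupp.mapDomain_apply hG.injective, Finsupp.mapDomain_apply hG.injective]
    exact hi

variable {n : ℕ} [NeZero n]

/-- block action on variables -/
def gmap (n : ℕ) (g : ℕ → ℕ) : ℕ × Fin n → ℕ × Fin n := Prod.map g id

omit [NeZero n] in
lemma gmap_injective {g : ℕ → ℕ} (hg : Function.Injective g) :
    Function.Injective (gmap n g) := fun a b h => by
  cases a; cases b
  simp only [gmap, Prod.map, Prod.mk.injEq, id] at h
  exact Prod.ext (hg h.1) h.2

def actM (g : ℕ → ℕ) (m : ℕ × Fin n →₀ ℕ) : ℕ × Fin n →₀ ℕ :=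
  Finsupp.mapDomain (gmap n g) m

def εd (n : ℕ) [NeZero n] : (ℕ × Fin n) ≃ ℕᵒᵈ :=
  (Nat.divModEquiv n).symm.trans OrderDual.toDual

def ordE (n : ℕ) [NeZero n] : ((ℕ × Fin n) →₀ ℕ) ≃ A :=
  (Finsupp.domCongr (εd n)).toEquiv.trans toLex

lemma ordE_add (a b : (ℕ × Fin n) →₀ ℕ) : ordE n (a + b) = ordE n a + ordE n b := by
  simp [ordE, map_add]

lemma G0_strictMono {g : ℕ → ℕ} (hg : StrictMono g) :
    StrictMono (fun t => g (t / n) * n + t % n) := by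
  intro t t' h
  dsimp only
  have hpos : 0 < n := Nat.pos_of_ne_zero (NeZero.ne n)
  rcases eq_or_lt_of_le (Nat.div_le_div_right h.le : t / n ≤ t' / n) with hd | hd
  · have h1 := Nat.div_add_mod t n
    have h2 := Nat.div_add_mod t' n
    rw [hd]
    have hm : t % n < t' % n := by rw [hd] at h1; omega
    omega
  · have h1 : g (t / n) + 1 ≤ g (t' / n) := hg hd
    calc g (t / n) * n + t % n < g (t / n) * n + n :=
          Nat.add_lt_add_left (Nat.mod_lt _ hpos) _
      _ = (g (t / n) + 1) * n := by ring
      _ ≤ g (t' / n) * n := Nat.mul_le_mul_right _ h1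
      _ ≤ g (t' / n) * n + t' % n := Nat.le_add_right _ _

lemma εd_gmap (g : ℕ → ℕ) (x : ℕᵒᵈ) :
    εd n (gmap n g ((εd n).symm x)) =
      OrderDual.toDual (g (OrderDual.ofDual x / n) * n + OrderDual.ofDual x % n) := by
  simp [εd, gmap, Nat.divModEquiv]

lemma Gd_strictMono {g : ℕ → ℕ} (hg : StrictMono g) :
    StrictMono (fun x : ℕᵒᵈ => εd n (gmap n g ((εd n).symm x))) := by
  intro x y hxy
  show εd n (gmap n g ((εd n).symm x)) < εd n (gmap n g ((εd n).symm y))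
  rw [εd_gmap, εd_gmap]
  exact OrderDual.toDual_lt_toDual.mpr
    (G0_strictMono hg (show OrderDual.ofDual y < OrderDual.ofDual x from hxy))

lemma ordE_actM {g : ℕ → ℕ} (hg : StrictMono g) (m : ℕ × Fin n →₀ ℕ) :
    ordE n (actM g m) =
      toLex (Finsupp.mapDomain (fun x : ℕᵒᵈ => εd n (gmap n g ((εd n).symm x)))
        (Finsupp.domCongr (εd n) m)) := by
  simp only [ordE, actM, Equiv.trans_apply, AddEquiv.toEquiv_eq_coe, Equiv.coe_fn_mk,
    EquivLike.coe_coe]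
  congr 1
  rw [Finsupp.domCongr_apply, Finsupp.domCongr_apply,
    Finsupp.equivMapDomain_eq_mapDomain, Finsupp.equivMapDomain_eq_mapDomain,
    ← Finsupp.mapDomain_comp, ← Finsupp.mapDomain_comp]
  congr 1
  funext v
  simp [Function.comp, Equiv.symm_apply_apply]

lemma ordE_actM_lt {g : ℕ → ℕ} (hg : StrictMono g) {a b : ℕ × Fin n →₀ ℕ}
    (h : ordE n a < ordE n b) : ordE n (actM g a) < ordE n (actM g b) := by
  rw [ordE_actM hg, ordE_actM hg]
  apply mapDomain_lex_lt (Gd_strictMono hg)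
  simpa [ordE] using h

lemma ordE_actM_le {g : ℕ → ℕ} (hg : StrictMono g) {a b : ℕ × Fin n →₀ ℕ}
    (h : ordE n a ≤ ordE n b) : ordE n (actM g a) ≤ ordE n (actM g b) := by
  rcases eq_or_lt_of_le h with he | hlt
  · obtain rfl : a = b := (ordE n).injective he
    exact le_rfl
  · exact (ordE_actM_lt hg hlt).le

variable {k : Type*} [Field k]

def deg (p : MvPolynomial (ℕ × Fin n) k) : A := p.support.sup (ordE n)

def lm (p : MvPolynomial (ℕ × Fin n) k) : ℕ × Fin n →₀ ℕ := (ordE n).symm (deg p)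

lemma lm_mem {p : MvPolynomial (ℕ × Fin n) k} (hp : p ≠ 0) : lm p ∈ p.support := by
  obtain ⟨m, hm, he⟩ := Finset.exists_mem_eq_sup p.support
    (support_nonempty.mpr hp) (ordE n)
  have : lm p = m := by rw [lm, deg, he, Equiv.symm_apply_apply]
  rwa [this]

lemma deg_eq_ordE_lm {p : MvPolynomial (ℕ × Fin n) k} : deg p = ordE n (lm p) := by
  rw [lm, Equiv.apply_symm_apply]

lemma coeff_lm_ne_zero {p : MvPolynomial (ℕ × Fin n) k} (hp : p ≠ 0) :
    coeff (lm p) p ≠ 0 := MvPolynomial.mem_support_iff.mp (lm_mem hp)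

lemma ordE_le_deg {p : MvPolynomial (ℕ × Fin n) k} {m} (h : m ∈ p.support) :
    ordE n m ≤ deg p := Finset.le_sup h

lemma lm_eq_of_mem_deg {p : MvPolynomial (ℕ × Fin n) k} {m} (hm : m ∈ p.support)
    (h : ordE n m = deg p) : m = lm p := by
  rw [lm, ← h, Equiv.symm_apply_apply]

lemma deg_sub_lt {p q : MvPolynomial (ℕ × Fin n) k} (hpq : p ≠ q) (hdeg : deg p = deg q)
    (hlc : coeff (lm p) p = coeff (lm p) q) : deg (p - q) < deg p := by
  have hd0 : p - q ≠ 0 := sub_ne_zero.mpr hpq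
  rw [deg_eq_ordE_lm (p := p - q)]
  have hmem := lm_mem hd0
  have hsub := MvPolynomial.support_sub (ℕ × Fin n) p q hmem
  have hle : ordE n (lm (p - q)) ≤ deg p := by
    rcases Finset.mem_union.mp hsub with h | h
    · exact ordE_le_deg h
    · rw [hdeg]; exact ordE_le_deg h
  rcases lt_or_eq_of_le hle with h' | h'
  · exact h'
  · exfalso
    have heq : lm (p - q) = lm p := by
      show lm (p - q) = (ordE n).symm (deg p)
      rw [← h', Equiv.symm_apply_apply]
    have hc : coeff (lm (p - q)) (p - q) = 0 := by
      rw [heq, MvPolynomial.coeff_sub, hlc, sub_self]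
    exact MvPolynomial.mem_support_iff.mp hmem hc

lemma deg_monomial_mul {p : MvPolynomial (ℕ × Fin n) k} {u : ℕ × Fin n →₀ ℕ} {c : k}
    (hc : c ≠ 0) (hp : p ≠ 0) :
    deg (monomial u c * p) = ordE n u + deg p ∧ lm (monomial u c * p) = u + lm p := by
  have hpmem : (u + lm p) ∈ (monomial u c * p).support := by
    rw [MvPolynomial.mem_support_iff, MvPolynomial.coeff_monomial_mul]
    exact mul_ne_zero hc (coeff_lm_ne_zero hp)
  have hdeg : deg (monomial u c * p) = ordE n u + deg p := by
    apply le_antisymm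
    · apply Finset.sup_le
      intro m hm
      rw [MvPolynomial.mem_support_iff, MvPolynomial.coeff_monomial_mul'] at hm
      by_cases hum : u ≤ m
      · rw [if_pos hum] at hm
        have h2 : coeff (m - u) p ≠ 0 := fun h => hm (by rw [h, mul_zero])
        have : m = u + (m - u) := by rw [add_comm, tsub_add_cancel_of_le hum]
        rw [this, ordE_add]
        exact add_le_add_right (ordE_le_deg (MvPolynomial.mem_support_iff.mpr h2)) _
      · rw [if_neg hum] at hm; exact absurd rfl hm
    · have h3 := ordE_le_deg hpmem
      rw [ordE_add] at h3
      rwa [deg_eq_ordE_lm (p := p)]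
  refine ⟨hdeg, ?_⟩
  apply (lm_eq_of_mem_deg hpmem ?_).symm
  rw [hdeg, ordE_add, deg_eq_ordE_lm (p := p)]

lemma rename_deg {p : MvPolynomial (ℕ × Fin n) k} {g : ℕ → ℕ} (hg : StrictMono g)
    (hp : p ≠ 0) :
    deg (rename (gmap n g) p) = ordE n (actM g (lm p)) ∧
      lm (rename (gmap n g) p) = actM g (lm p) ∧
      coeff (actM g (lm p)) (rename (gmap n g) p) = coeff (lm p) p := by
  have hinj : Function.Injective (gmap n g) := gmap_injective hg.injective
  have hsup : (rename (gmap n g) p).support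
      = p.support.image (Finsupp.mapDomain (gmap n g)) :=
    MvPolynomial.support_rename_of_injective hinj
  have hco : coeff (actM g (lm p)) (rename (gmap n g) p) = coeff (lm p) p :=
    MvPolynomial.coeff_rename_mapDomain _ hinj _ _
  have hmem : actM g (lm p) ∈ (rename (gmap n g) p).support := by
    rw [MvPolynomial.mem_support_iff, hco]; exact coeff_lm_ne_zero hp
  have hdeg : deg (rename (gmap n g) p) = ordE n (actM g (lm p)) := by
    apply le_antisymm
    · apply Finset.sup_le
      intro m hm
      rw [hsup, Finset.mem_image] at hm
      obtain ⟨m', hm', rfl⟩ := hm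
      exact ordE_actM_le hg (by rw [← deg_eq_ordE_lm]; exact ordE_le_deg hm')
    · exact ordE_le_deg hmem
  exact ⟨hdeg, (lm_eq_of_mem_deg hmem hdeg.symm).symm, hco⟩

def Dom (a b : ℕ × Fin n →₀ ℕ) : Prop := ∃ g : ℕ → ℕ, StrictMono g ∧ actM g a ≤ b

lemma exists_dom (m : ℕ → (ℕ × Fin n →₀ ℕ)) : ∃ i j, i < j ∧ Dom (m i) (m j) := by
  classical
  set B : ℕ → ℕ := fun t => ((m t).support.sup Prod.fst) + 1 with hB
  have hbound : ∀ t (v : ℕ × Fin n), v ∈ (m t).support → v.1 < B t := by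
    intro t v hv
    exact Nat.lt_succ_of_le (Finset.le_sup (f := Prod.fst) hv)
  set L : ℕ → List (Fin n → ℕ) :=
    fun t => (List.range (B t)).map (fun j => fun i => m t (j, i)) with hL
  have hiw : ∀ _ : Fin n, IsWellOrder ℕ (· < ·) := fun _ => inferInstance
  have hpwo : (Set.univ : Set (Fin n → ℕ)).PartiallyWellOrderedOn (· ≤ ·) :=
    Set.isPWO_of_wellQuasiOrderedLE Set.univ
  have hlists := Set.PartiallyWellOrderedOn.partiallyWellOrderedOn_sublistForall₂
    (· ≤ ·) hpwo
  obtain ⟨i, j, hij, hsub⟩ := hlists.exists_lt (f := L) (fun t x _ => Set.mem_univ x)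
  rw [List.sublistForall₂_iff] at hsub
  obtain ⟨l, hall, hsubl⟩ := hsub
  rw [List.sublist_iff_exists_orderEmbedding_getElem?_eq] at hsubl
  obtain ⟨f, hf⟩ := hsubl
  have hlenL : ∀ t, (L t).length = B t := by intro t; simp [hL]
  have hlen : l.length = B i := by rw [← hall.length_eq, hlenL]
  refine ⟨i, j, hij, ⟨f, f.strictMono, ?_⟩⟩
  rw [Finsupp.le_def]
  intro v
  by_cases hr : ∃ s, f s = v.1
  · obtain ⟨s, hs⟩ := hr
    have hv : v = gmap n f (s, v.2) := by
      simp only [gmap, Prod.map, id]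
      rw [hs]
    rw [hv, actM, Finsupp.mapDomain_apply (gmap_injective f.injective)]
    by_cases hsB : s < B i
    · -- use the list inequality
      have hgetL : ∀ t (s' : ℕ) (h : s' < B t),
          (L t).get ⟨s', by rw [hlenL]; exact h⟩ = fun i₀ => m t (s', i₀) := by
        intro t s' h
        simp [hL]
      have h1 : (L i).get ⟨s, by rw [hlenL]; exact hsB⟩ ≤ l.get ⟨s, by rw [hlen]; exact hsB⟩ := by
        have := List.forall₂_iff_get.mp hall
        exact this.2 s _ _
      have h2 : l[s]? = (L j)[f s]? := hf s
      have h3 : l[s]? = some (l.get ⟨s, by rw [hlen]; exact hsB⟩) := List.getElem?_eq_getElem _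
      have h4 : (L j)[f s]? = some (l.get ⟨s, by rw [hlen]; exact hsB⟩) := by
        rw [← h2, h3]
      have h5 := List.getElem?_eq_some_iff.mp h4
      obtain ⟨hflt, h6⟩ := h5
      have hfsB : f s < B j := by rwa [hlenL] at hflt
      have h7 : (fun i₀ => m i (s, i₀)) ≤ (fun i₀ => m j (f s, i₀)) := by
        rw [← hgetL i s hsB, ← hgetL j (f s) hfsB]
        exact le_of_le_of_eq h1 h6.symm
      exact h7 v.2
    · have : m i (s, v.2) = 0 := by
        rw [← Finsupp.notMem_support_iff]
        intro hmem
        exact hsB (hbound i _ hmem)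
      rw [this]
      exact Nat.zero_le _
  · have : v ∉ Set.range (gmap n f) := by
      rintro ⟨⟨s, i₀⟩, rfl⟩
      exact hr ⟨s, rfl⟩
    rw [actM, Finsupp.mapDomain_notin_range _ _ this]
    exact Nat.zero_le _

def Stable (I : Ideal (MvPolynomial (ℕ × Fin n) k)) : Prop :=
  ∀ g : ℕ → ℕ, StrictMono g → ∀ f ∈ I, rename (gmap n g) f ∈ I

theorem ideal_chain_stab (I : ℕ → Ideal (MvPolynomial (ℕ × Fin n) k))
    (hmono : ∀ q, I q ≤ I (q + 1)) (hst : ∀ q, Stable (I q)) :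
    ∃ N, ∀ q, N ≤ q → I q = I N := by
  classical
  by_contra hcon
  push_neg at hcon
  have hmono' : Monotone I := monotone_nat_of_le_succ hmono
  have hjump : ∀ N, ∃ r, N ≤ r ∧ I r ≠ I (r + 1) := by
    intro N
    obtain ⟨q, hq, hne⟩ := hcon N
    by_contra hall
    push_neg at hall
    apply hne
    have : ∀ q', N ≤ q' → I q' = I N := by
      intro q' hq'
      induction q', hq' using Nat.le_induction with
      | base => rfl
      | succ q' hq' ih => rw [← hall q' hq']; exact ih
    exact this q hq
  choose r hr hne using hjump
  set t : ℕ → ℕ := fun s => Nat.rec (r 0) (fun _ ts => r (ts + 1)) s with ht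
  have htjump : ∀ s, I (t s) ≠ I (t s + 1) := by
    intro s
    cases s with
    | zero => exact hne 0
    | succ s => exact hne (t s + 1)
  have htlt : ∀ s, t s < t (s + 1) := by
    intro s
    have : t (s + 1) = r (t s + 1) := rfl
    rw [this]
    exact Nat.lt_of_succ_le (hr (t s + 1))
  have htmono : StrictMono t := strictMono_nat_of_lt_succ htlt
  -- minimal degree selection
  have hsel : ∀ s, ∃ f : MvPolynomial (ℕ × Fin n) k,
      (f ∈ I (t s + 1) ∧ f ∉ I (t s)) ∧
        ∀ f', f' ∈ I (t s + 1) → f' ∉ I (t s) → ¬ deg f' < deg f := by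
    intro s
    have hlt : I (t s) < I (t s + 1) := lt_of_le_of_ne (hmono (t s)) (htjump s)
    obtain ⟨f0, hf01, hf02⟩ := SetLike.exists_of_lt hlt
    have hnem : (deg '' {f : MvPolynomial (ℕ × Fin n) k |
        f ∈ I (t s + 1) ∧ f ∉ I (t s)}).Nonempty := ⟨deg f0, f0, ⟨hf01, hf02⟩, rfl⟩
    obtain ⟨d, ⟨f, hfP, hfd⟩, hmin⟩ := WellFounded.has_min
      (wellFounded_lt (α := A)) _ hnem
    refine ⟨f, hfP, fun f' h1 h2 hlt' => hmin (deg f') ⟨f', ⟨h1, h2⟩, rfl⟩ ?_⟩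
    rwa [← hfd]
  choose F hF hFmin using hsel
  obtain ⟨i, j, hij, g, hg, hle⟩ := exists_dom (fun s => lm (F s))
  have hFi0 : F i ≠ 0 := fun h => (hF i).2 (h ▸ (I (t i)).zero_mem)
  have hFj0 : F j ≠ 0 := fun h => (hF j).2 (h ▸ (I (t j)).zero_mem)
  obtain ⟨hr1, hr2, hr3⟩ := rename_deg (k := k) hg hFi0
  have hGI : rename (gmap n g) (F i) ∈ I (t j) := by
    have h1 : rename (gmap n g) (F i) ∈ I (t i + 1) := hst (t i + 1) g hg _ (hF i).1
    exact hmono' (Nat.succ_le_of_lt (htmono hij)) h1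
  have hG0 : rename (gmap n g) (F i) ≠ 0 := by
    intro h
    apply coeff_lm_ne_zero hFi0
    rw [← hr3, h]
    simp
  set u := lm (F j) - actM g (lm (F i)) with hu
  have hsum : u + actM g (lm (F i)) = lm (F j) := tsub_add_cancel_of_le hle
  set c := coeff (lm (F j)) (F j) / coeff (lm (F i)) (F i) with hc
  have hcne : c ≠ 0 := div_ne_zero (coeff_lm_ne_zero hFj0) (coeff_lm_ne_zero hFi0)
  obtain ⟨hq1, hq2⟩ := deg_monomial_mul (u := u) hcne hG0
  have hdegQ : deg (monomial u c * rename (gmap n g) (F i)) = deg (F j) := by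
    rw [hq1, hr1, ← ordE_add, hsum, ← deg_eq_ordE_lm]
  have hcoQ : coeff (lm (F j)) (monomial u c * rename (gmap n g) (F i))
      = coeff (lm (F j)) (F j) := by
    have h1 : coeff (u + actM g (lm (F i))) (monomial u c * rename (gmap n g) (F i))
        = c * coeff (actM g (lm (F i))) (rename (gmap n g) (F i)) := by
      rw [← hr2]
      exact MvPolynomial.coeff_monomial_mul _ _ _ _
    rw [hsum] at h1
    rw [h1, hr3, hc, div_mul_cancel₀ _ (coeff_lm_ne_zero hFi0)]
  have hQI : monomial u c * rename (gmap n g) (F i) ∈ I (t j) :=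
    Ideal.mul_mem_left _ _ hGI
  have hne' : F j ≠ monomial u c * rename (gmap n g) (F i) := fun h => (hF j).2 (h ▸ hQI)
  have hdlt : deg (F j - monomial u c * rename (gmap n g) (F i)) < deg (F j) :=
    deg_sub_lt hne' hdegQ.symm hcoQ.symm
  have hmem1 : F j - monomial u c * rename (gmap n g) (F i) ∈ I (t j + 1) :=
    sub_mem (hF j).1 (hmono (t j) hQI)
  have hmem2 : F j - monomial u c * rename (gmap n g) (F i) ∉ I (t j) := by
    intro h
    apply (hF j).2
    have h2 : F j = (F j - monomial u c * rename (gmap n g) (F i))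
        + monomial u c * rename (gmap n g) (F i) := by ring
    rw [h2]
    exact add_mem h hQI
  exact hFmin j _ hmem1 hmem2 hdlt

-- finitary permutations
lemma IsFinPerm.one : IsFinPerm 1 := ⟨0, fun _ _ => rfl⟩

lemma IsFinPerm.mul {σ τ : Equiv.Perm ℕ} (hσ : IsFinPerm σ) (hτ : IsFinPerm τ) :
    IsFinPerm (σ * τ) := by
  obtain ⟨N1, h1⟩ := hσ
  obtain ⟨N2, h2⟩ := hτ
  refine ⟨max N1 N2, fun i hi => ?_⟩
  have : τ i = i := h2 i (le_trans (le_max_right _ _) hi)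
  show σ (τ i) = i
  rw [this]
  exact h1 i (le_trans (le_max_left _ _) hi)

lemma IsFinPerm.swap (a b : ℕ) : IsFinPerm (Equiv.swap a b) := by
  refine ⟨max a b + 1, fun i hi => ?_⟩
  have ha : i ≠ a := by omega
  have hb : i ≠ b := by omega
  exact Equiv.swap_apply_of_ne_of_ne ha hb

lemma IsFinPerm.inv {σ : Equiv.Perm ℕ} (hσ : IsFinPerm σ) : IsFinPerm σ⁻¹ := by
  obtain ⟨N, h⟩ := hσ
  refine ⟨N, fun i hi => ?_⟩
  conv_lhs => rw [← h i hi]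
  rw [Equiv.Perm.inv_def, Equiv.symm_apply_apply]

lemma exists_finPerm {g : ℕ → ℕ} (hg : Function.Injective g) (B : ℕ) :
    ∃ σ : Equiv.Perm ℕ, IsFinPerm σ ∧ ∀ j, j < B → σ j = g j := by
  induction B with
  | zero => exact ⟨1, IsFinPerm.one, fun j hj => absurd hj (Nat.not_lt_zero j)⟩
  | succ B ih =>
    obtain ⟨σ, hσfin, hσag⟩ := ih
    refine ⟨σ * Equiv.swap B (σ⁻¹ (g B)), IsFinPerm.mul hσfin (IsFinPerm.swap _ _), fun j hj => ?_⟩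
    rcases Nat.lt_succ_iff_lt_or_eq.mp hj with hj | rfl
    · have h1 : j ≠ B := Nat.ne_of_lt hj
      have h2 : j ≠ σ⁻¹ (g B) := by
        intro h
        have : σ j = g B := by rw [h, Equiv.Perm.inv_def, Equiv.apply_symm_apply]
        rw [hσag j hj] at this
        exact absurd (hg this) h1
      show σ (Equiv.swap B (σ⁻¹ (g B)) j) = g j
      rw [Equiv.swap_apply_of_ne_of_ne h1 h2, hσag j hj]
    · show σ (Equiv.swap j (σ⁻¹ (g j)) j) = g j
      rw [Equiv.swap_apply_left, Equiv.Perm.inv_def, Equiv.apply_symm_apply]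

/-- the vanishing ideal of a set of points -/
def vIdeal (X : Set (ℕ → Fin n → k)) : Ideal (MvPolynomial (ℕ × Fin n) k) where
  carrier := {f | ∀ x ∈ X, eval (fun p : ℕ × Fin n => x p.1 p.2) f = 0}
  zero_mem' := fun x _ => by simp
  add_mem' := by
    intro f g hf hg x hx
    rw [map_add, hf x hx, hg x hx, add_zero]
  smul_mem' := by
    intro c f hf x hx
    rw [smul_eq_mul, map_mul, hf x hx, mul_zero]

lemma mem_vIdeal {X : Set (ℕ → Fin n → k)} {f} :
    f ∈ vIdeal X ↔ ∀ x ∈ X, eval (fun p : ℕ × Fin n => x p.1 p.2) f = 0 := Iff.rfl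

lemma stable_vIdeal {X : Set (ℕ → Fin n → k)}
    (hX : ∀ σ : Equiv.Perm ℕ, IsFinPerm σ → ∀ x ∈ X, (fun s => x (σ⁻¹ s)) ∈ X) :
    Stable (vIdeal X) := by
  intro g hg f hf x hx
  rw [eval_rename]
  set B := (f.vars.sup Prod.fst) + 1 with hB
  obtain ⟨σ, hσfin, hσag⟩ := exists_finPerm hg.injective B
  have hx' : (fun s => x (σ s)) ∈ X := by
    have h := hX σ⁻¹ (IsFinPerm.inv hσfin) x hx
    simpa using h
  have h0 := hf _ hx'
  have hagree : ∀ v : ℕ × Fin n, v ∈ f.vars →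
      ((fun p : ℕ × Fin n => x p.1 p.2) ∘ gmap n g) v
        = (fun p : ℕ × Fin n => x (σ p.1) p.2) v := by
    intro v hv
    have hvB : v.1 < B := Nat.lt_succ_of_le (Finset.le_sup (f := Prod.fst) hv)
    show x (g v.1) v.2 = x (σ v.1) v.2
    rw [hσag v.1 hvB]
  calc eval ((fun p : ℕ × Fin n => x p.1 p.2) ∘ gmap n g) f
      = eval (fun p : ℕ × Fin n => x (σ p.1) p.2) f := by
        show eval₂Hom (RingHom.id k) _ f = eval₂Hom (RingHom.id k) _ f
        exact eval₂Hom_congr' rfl (fun i h1 _ => hagree i h1) rfl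
    _ = 0 := h0

theorem main {k : Type*} [Field k]
    (n : ℕ) (Z : Set (Fin n → k)) (hZcl : IsZClosed Z)
    (X : ℕ → Set (ℕ → Fin n → k))
    (hchain : ∀ q : ℕ, X (q + 1) ⊆ X q)
    (hclosed : ∀ q : ℕ, ∃ S : Set (MvPolynomial (ℕ × Fin n) k),
      X q = {x | (∀ s : ℕ, x s ∈ Z) ∧
        ∀ f ∈ S, MvPolynomial.eval (fun p : ℕ × Fin n => x p.1 p.2) f = 0})
    (hSym : ∀ (q : ℕ) (σ : Equiv.Perm ℕ), IsFinPerm σ →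
      ∀ x ∈ X q, (fun s => x (σ⁻¹ s)) ∈ X q) :
    ∃ N : ℕ, ∀ q : ℕ, N ≤ q → X q = X (q + 1) := by
  rcases Nat.eq_zero_or_pos n with rfl | hn
  · -- n = 0 : the ambient space is a subsingleton
    have hsub : Subsingleton (ℕ → Fin 0 → k) := by
      constructor
      intro a b
      funext s i
      exact absurd i.2 (Nat.not_lt_zero _)
    by_cases h : ∃ q0, X q0 = ∅
    · obtain ⟨q0, hq0⟩ := h
      have hanti : Antitone X := antitone_nat_of_succ_le hchain
      refine ⟨q0, fun q hq => ?_⟩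
      have h1 : X q = ∅ := Set.subset_eq_empty (hq0 ▸ hanti hq) rfl
      have h2 : X (q + 1) = ∅ :=
        Set.subset_eq_empty (hq0 ▸ hanti (le_trans hq (Nat.le_succ q))) rfl
      rw [h1, h2]
    · push_neg at h
      have huniv : ∀ q, X q = Set.univ := by
        intro q
        obtain ⟨x, hx⟩ := h q
        apply Set.eq_univ_iff_forall.mpr
        intro y
        rwa [Subsingleton.elim y x]
      exact ⟨0, fun q _ => by rw [huniv q, huniv (q + 1)]⟩
  · have : NeZero n := ⟨Nat.pos_iff_ne_zero.mp hn⟩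
    obtain ⟨SZ, hSZ⟩ := hZcl
    set I : ℕ → Ideal (MvPolynomial (ℕ × Fin n) k) := fun q => vIdeal (X q) with hI
    have hmono : ∀ q, I q ≤ I (q + 1) := by
      intro q f hf x hx
      exact hf x (hchain q hx)
    have hst : ∀ q, Stable (I q) := fun q => stable_vIdeal (hSym q)
    -- X q is the zero locus of I q
    have hXq : ∀ q, X q = {x | ∀ f ∈ I q,
        eval (fun p : ℕ × Fin n => x p.1 p.2) f = 0} := by
      intro q
      obtain ⟨S, hS⟩ := hclosed q
      apply Set.Subset.antisymm
      · intro x hx f hf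
        exact hf x hx
      · intro x hx
        rw [hS]
        refine ⟨fun s => ?_, fun f hfS => ?_⟩
        · -- x s ∈ Z
          rw [hSZ]
          intro p hp
          have hmem : rename (Prod.mk s) p ∈ I q := by
            intro y hy
            rw [eval_rename_prod_mk]
            have hyZ : y s ∈ Z := by
              rw [hS] at hy
              exact hy.1 s
            rw [hSZ] at hyZ
            have := hyZ p hp
            convert this using 2
          have := hx _ hmem
          rw [eval_rename_prod_mk] at this
          convert this using 2
        · -- polynomials in S vanish
          apply hx
          intro y hy
          rw [hS] at hy
          exact hy.2 f hfS
    obtain ⟨N, hN⟩ := ideal_chain_stab I hmono hst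
    refine ⟨N, fun q hq => ?_⟩
    rw [hXq q, hXq (q + 1), hN q hq, hN (q + 1) (le_trans hq (Nat.le_succ q))]

end SymNoeth

/-- **Sym-Noetherianity of `Z^ℕ` for a finite-dimensional affine variety `Z`.**
`Z` is a Zariski-closed subset of `Fin n → k`, and `Sym` (finitary permutations
of `ℕ`) acts on `Z^ℕ` by permuting the copies. Every descending chain of
`Sym`-stable closed subsets of `Z^ℕ` stabilises. -/
theorem symNoetherianity_of_powers_of_affine_varieties
    {k : Type*} [Field k] [IsAlgClosed k] [CharZero k]
    (n : ℕ) (Z : Set (Fin n → k)) (hZcl : IsZClosed Z)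
    (X : ℕ → Set (ℕ → Fin n → k))
    (hchain : ∀ q : ℕ, X (q + 1) ⊆ X q)
    (hclosed : ∀ q : ℕ, ∃ S : Set (MvPolynomial (ℕ × Fin n) k),
      X q = {x | (∀ s : ℕ, x s ∈ Z) ∧
        ∀ f ∈ S, MvPolynomial.eval (fun p : ℕ × Fin n => x p.1 p.2) f = 0})
    (hSym : ∀ (q : ℕ) (σ : Equiv.Perm ℕ), IsFinPerm σ →
      ∀ x ∈ X q, (fun s => x (σ⁻¹ s)) ∈ X q) :
    ∃ N : ℕ, ∀ q : ℕ, N ≤ q → X q = X (q + 1) := by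
  exact SymNoeth.main n Z hZcl X hchain hclosed hSym
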